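/- (Non-minimality of iteratively expanded solutions.) Consider atoms a, b, c, p, background B = ∅, hypothesis space L consisting of all rules with head a, positive body a subset of {b, c, p}, and empty negative body, and the three examples E_1 = ({p., b., c.}, {a}, ∅), E_2 = ({b.}, ∅, {a}), E_3 = ({c.}, {a}, ∅). Then: (i) {a ← p.} and {a ← c.} are both minimal solutions of the task with examples ⟨E_1, E_2⟩; (ii) {a ← p., a ← c.} is a solution of the task with examples ⟨E_1, E_2, E_3⟩; but (iii) {a ← p., a ← c.} is not a minimal solution of that task, since {a ← c.} is also a solution and {a ← c.} < {a ← p., a ← c.}. -/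

import Mathlib

namespace ASP

/-- A ground normal rule: a head atom, a finite set of positive body atoms,
and a finite set of negated body atoms. -/
structure Rule (α : Type) where
  head : α
  pos : Finset α
  neg : Finset α
deriving DecidableEq

variable {α : Type}

/-- An interpretation `M` satisfies a rule `r` if `head r ∈ M` whenever
`pos r ⊆ M` and `neg r ∩ M = ∅`. -/
def ruleSat (M : Set α) (r : Rule α) : Prop :=
  ((↑r.pos : Set α) ⊆ M ∧ ∀ a ∈ r.neg, a ∉ M) → r.head ∈ M

/-- `M` is a model of a program if it satisfies every rule. -/
def isModel (M : Set α) (P : Set (Rule α)) : Prop :=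
  ∀ r ∈ P, ruleSat M r

/-- A definite program has no negated body atoms. -/
def isDefinite (P : Set (Rule α)) : Prop :=
  ∀ r ∈ P, r.neg = ∅

/-- The reduct `P^M`: the definite program
`{(head r, pos r, ∅) : r ∈ P, neg r ∩ M = ∅}`. -/
def reduct (P : Set (Rule α)) (M : Set α) : Set (Rule α) :=
  {r' | ∃ r ∈ P, (∀ a ∈ r.neg, a ∉ M) ∧ r' = ⟨r.head, r.pos, ∅⟩}

/-- `M` is the least model of `P`: a model contained in every model of `P`. -/
def isLeastModel (M : Set α) (P : Set (Rule α)) : Prop :=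
  isModel M P ∧ ∀ M', isModel M' P → M ⊆ M'

/-- `M` is a stable model (answer set) of `P` if `M` is the least model of
the reduct `P^M`. -/
def isStable (M : Set α) (P : Set (Rule α)) : Prop :=
  isLeastModel M (reduct P M)

/-- A program is stratified if there is a stratification function `s` on atoms. -/
def isStratified (P : Set (Rule α)) : Prop :=
  ∃ s : α → ℕ, ∀ r ∈ P,
    (∀ a ∈ r.pos, s a ≤ s r.head) ∧ (∀ a ∈ r.neg, s a < s r.head)

/-- `P ⊢ a` : atom `a` belongs to every stable model of `P`. -/
def entails (P : Set (Rule α)) (a : α) : Prop :=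
  ∀ M, isStable M P → a ∈ M

/-- `H1 ≤ H2` for finite ground programs: there is an injective map `f` from the
rules of `H1` to the rules of `H2` preserving heads and (weakly) enlarging bodies. -/
def progLE (H1 H2 : Finset (Rule α)) : Prop :=
  ∃ f : Rule α → Rule α, Set.InjOn f ↑H1 ∧
    ∀ r ∈ H1, f r ∈ H2 ∧ (f r).head = r.head ∧ r.pos ⊆ (f r).pos ∧ r.neg ⊆ (f r).neg

/-- `H1 < H2` iff `H1 ≤ H2` and `H1 ≠ H2`. -/
def progLT (H1 H2 : Finset (Rule α)) : Prop :=
  progLE H1 H2 ∧ H1 ≠ H2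

/-- A context-dependent example: an observation program `obs` together with finite
sets of positive and negative example atoms. -/
structure ILPExample (α : Type) where
  obs : Set (Rule α)
  epos : Finset α
  eneg : Finset α

/-- `H` covers example `E` (relative to background `B`): every positive example atom
belongs to every stable model of `B ∪ O ∪ H`, and no negative example atom does. -/
def covers (B : Set (Rule α)) (H : Finset (Rule α)) (E : ILPExample α) : Prop :=
  (∀ a ∈ E.epos, entails (B ∪ E.obs ∪ ↑H) a) ∧
  (∀ a ∈ E.eneg, ¬ entails (B ∪ E.obs ∪ ↑H) a)

/-- `H` is a solution of the ILP task for distinct examples `(B, L, Es)`. -/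
def isSolution (B L : Set (Rule α)) (Es : List (ILPExample α))
    (H : Finset (Rule α)) : Prop :=
  (↑H : Set (Rule α)) ⊆ L ∧ ∀ E ∈ Es, covers B H E

/-- A solution `H` is minimal if no solution `H'` satisfies `H' < H`. -/
def isMinimalSolution (B L : Set (Rule α)) (Es : List (ILPExample α))
    (H : Finset (Rule α)) : Prop :=
  isSolution B L Es H ∧ ¬∃ H', isSolution B L Es H' ∧ progLT H' H

inductive Atom : Type
  | a | b | c | p
deriving DecidableEq

/-- A fact: a rule with the given head and empty body. -/
def fact (x : Atom) : Rule Atom := ⟨x, ∅, ∅⟩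

/-- The rule `a ← p.` -/
def ruleAP : Rule Atom := ⟨Atom.a, {Atom.p}, ∅⟩

/-- The rule `a ← c.` -/
def ruleAC : Rule Atom := ⟨Atom.a, {Atom.c}, ∅⟩

/-- Hypothesis space: all rules with head `a`, positive body a subset of
`{b, c, p}`, and empty negative body. -/
def Lspace : Set (Rule Atom) :=
  {r | r.head = Atom.a ∧ r.pos ⊆ ({Atom.b, Atom.c, Atom.p} : Finset Atom) ∧ r.neg = ∅}

def Ex1 : ILPExample Atom := ⟨{fact Atom.p, fact Atom.b, fact Atom.c}, {Atom.a}, ∅⟩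
def Ex2 : ILPExample Atom := ⟨{fact Atom.b}, ∅, {Atom.a}⟩
def Ex3 : ILPExample Atom := ⟨{fact Atom.c}, {Atom.a}, ∅⟩

lemma mem_of_stable {P : Set (Rule Atom)} {M : Set Atom} (h : isStable M P)
    {r : Rule Atom} (hr : r ∈ P) (hneg : ∀ a ∈ r.neg, a ∉ M)
    (hpos : (↑r.pos : Set Atom) ⊆ M) : r.head ∈ M := by
  have hmem : (⟨r.head, r.pos, ∅⟩ : Rule Atom) ∈ reduct P M := ⟨r, hr, hneg, rfl⟩
  exact h.1 (⟨r.head, r.pos, ∅⟩ : Rule Atom) hmem ⟨hpos, by simp⟩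

lemma not_entails {P : Set (Rule Atom)} {M : Set Atom} (h : isStable M P)
    {x : Atom} (hx : x ∉ M) : ¬ entails P x := fun he => hx (he M h)

lemma reduct_definite {P : Set (Rule Atom)} (h : isDefinite P) (M : Set Atom) :
    reduct P M = P := by
  ext r
  constructor
  · rintro ⟨s, hs, -, rfl⟩
    have hn := h s hs
    cases s with
    | mk hd ps ns => simp_all
  · intro hr
    refine ⟨r, hr, by simp [h r hr], ?_⟩
    have hn := h r hr
    cases r with
    | mk hd ps ns => simp_all

lemma stable_of_definite {P : Set (Rule Atom)} (hd : isDefinite P) {M : Set Atom}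
    (h : isLeastModel M P) : isStable M P := by
  rw [isStable, reduct_definite hd]; exact h

lemma model_fact {M : Set Atom} {P : Set (Rule Atom)} (h : isModel M P)
    {x : Atom} (hx : fact x ∈ P) : x ∈ M :=
  h _ hx ⟨by simp [fact], by simp [fact]⟩

/-- `{b}` is a stable model of `{b.} ∪ H` if every rule of `H` is definite with
head `a` and positive body not contained in `{b}`. -/
lemma stable_Mb {H : Finset (Rule Atom)}
    (hH : ∀ r ∈ H, r.neg = ∅ ∧ ¬ ((↑r.pos : Set Atom) ⊆ {Atom.b})) :
    isStable {Atom.b} ((∅ : Set (Rule Atom)) ∪ Ex2.obs ∪ ↑H) := by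
  have hmem : ∀ r : Rule Atom, r ∈ ((∅ : Set (Rule Atom)) ∪ Ex2.obs ∪ ↑H) ↔
      (r = fact Atom.b ∨ r ∈ H) := by
    intro r; simp [Ex2]
  apply stable_of_definite
  · intro r hr
    rcases (hmem r).1 hr with h | h
    · subst h; rfl
    · exact (hH r h).1
  constructor
  · intro r hr
    rcases (hmem r).1 hr with h | h
    · subst h; intro _; simp [fact]
    · rintro ⟨h1, -⟩
      exact absurd h1 (hH r h).2
  · intro M' hM' x hx
    simp only [Set.mem_singleton_iff] at hx
    subst hx
    exact model_fact hM' ((hmem _).2 (Or.inl rfl))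

lemma stable_Mpbc :
    isStable {Atom.p, Atom.b, Atom.c}
      ((∅ : Set (Rule Atom)) ∪ Ex1.obs ∪ ↑(∅ : Finset (Rule Atom))) := by
  have hmem : ∀ r : Rule Atom,
      r ∈ ((∅ : Set (Rule Atom)) ∪ Ex1.obs ∪ ↑(∅ : Finset (Rule Atom))) ↔
      (r = fact Atom.p ∨ r = fact Atom.b ∨ r = fact Atom.c) := by
    intro r; simp [Ex1]
  apply stable_of_definite
  · intro r hr
    rcases (hmem r).1 hr with h | h | h <;> subst h <;> rfl
  constructor
  · intro r hr
    rcases (hmem r).1 hr with h | h | h <;> subst h <;> intro _ <;> simp [fact]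
  · intro M' hM' x hx
    simp only [Set.mem_insert_iff, Set.mem_singleton_iff] at hx
    rcases hx with h | h | h <;> subst h <;>
      exact model_fact hM' ((hmem _).2 (by simp))

/-- Entailment of `a` from a program containing `fact x` and a rule `a ← x`. -/
lemma entails_a {P : Set (Rule Atom)} {x : Atom} (h1 : fact x ∈ P)
    (h2 : (⟨Atom.a, {x}, ∅⟩ : Rule Atom) ∈ P) : entails P Atom.a := by
  intro M hM
  have hx : x ∈ M := mem_of_stable hM h1 (by simp [fact]) (by simp [fact])
  exact mem_of_stable hM h2 (by simp) (by simp [hx])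

lemma notsub {x : Atom} (hx : x ≠ Atom.b) :
    ¬ ((↑({x} : Finset Atom) : Set Atom) ⊆ {Atom.b}) :=
  fun h => hx (by simpa using h (by simp))

lemma solAP : isSolution (∅ : Set (Rule Atom)) Lspace [Ex1, Ex2] {ruleAP} := by
  constructor
  · intro r hr
    simp only [Finset.coe_singleton, Set.mem_singleton_iff] at hr
    subst hr
    exact ⟨rfl, by decide, rfl⟩
  · intro E hE
    simp only [List.mem_cons, List.not_mem_nil, or_false] at hE
    rcases hE with h | h <;> subst h
    · refine ⟨?_, by simp [Ex1]⟩
      intro y hy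
      simp only [Ex1, Finset.mem_singleton] at hy
      subst hy
      exact entails_a (x := Atom.p) (by simp [Ex1]) (by simp [Ex1, ruleAP])
    · refine ⟨by simp [Ex2], ?_⟩
      intro y hy
      simp only [Ex2, Finset.mem_singleton] at hy
      subst hy
      refine not_entails (stable_Mb ?_) (by simp)
      intro r hr
      simp only [Finset.mem_singleton] at hr
      subst hr
      exact ⟨rfl, notsub (by decide)⟩

lemma solAC : isSolution (∅ : Set (Rule Atom)) Lspace [Ex1, Ex2] {ruleAC} := by
  constructor
  · intro r hr
    simp only [Finset.coe_singleton, Set.mem_singleton_iff] at hr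
    subst hr
    exact ⟨rfl, by decide, rfl⟩
  · intro E hE
    simp only [List.mem_cons, List.not_mem_nil, or_false] at hE
    rcases hE with h | h <;> subst h
    · refine ⟨?_, by simp [Ex1]⟩
      intro y hy
      simp only [Ex1, Finset.mem_singleton] at hy
      subst hy
      exact entails_a (x := Atom.c) (by simp [Ex1]) (by simp [Ex1, ruleAC])
    · refine ⟨by simp [Ex2], ?_⟩
      intro y hy
      simp only [Ex2, Finset.mem_singleton] at hy
      subst hy
      refine not_entails (stable_Mb ?_) (by simp)
      intro r hr
      simp only [Finset.mem_singleton] at hr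
      subst hr
      exact ⟨rfl, notsub (by decide)⟩

lemma solAC3 : isSolution (∅ : Set (Rule Atom)) Lspace [Ex1, Ex2, Ex3] {ruleAC} := by
  constructor
  · exact solAC.1
  · intro E hE
    simp only [List.mem_cons, List.not_mem_nil, or_false] at hE
    rcases hE with h | h | h
    · subst h; exact solAC.2 Ex1 (by simp)
    · subst h; exact solAC.2 Ex2 (by simp)
    · subst h
      refine ⟨?_, by simp [Ex3]⟩
      intro y hy
      simp only [Ex3, Finset.mem_singleton] at hy
      subst hy
      exact entails_a (x := Atom.c) (by simp [Ex3]) (by simp [Ex3, ruleAC])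

lemma solPair : isSolution (∅ : Set (Rule Atom)) Lspace [Ex1, Ex2, Ex3] {ruleAP, ruleAC} := by
  constructor
  · intro r hr
    simp only [Finset.coe_insert, Finset.coe_singleton, Set.mem_insert_iff,
      Set.mem_singleton_iff] at hr
    rcases hr with h | h <;> subst h <;> exact ⟨rfl, by decide, rfl⟩
  · intro E hE
    simp only [List.mem_cons, List.not_mem_nil, or_false] at hE
    rcases hE with h | h | h <;> subst h
    · refine ⟨?_, by simp [Ex1]⟩
      intro y hy
      simp only [Ex1, Finset.mem_singleton] at hy
      subst hy
      exact entails_a (x := Atom.c) (by simp [Ex1]) (by simp [Ex1, ruleAC])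
    · refine ⟨by simp [Ex2], ?_⟩
      intro y hy
      simp only [Ex2, Finset.mem_singleton] at hy
      subst hy
      refine not_entails (stable_Mb ?_) (by simp)
      intro r hr
      simp only [Finset.mem_insert, Finset.mem_singleton] at hr
      rcases hr with h | h <;> subst h <;> exact ⟨rfl, notsub (by decide)⟩
    · refine ⟨?_, by simp [Ex3]⟩
      intro y hy
      simp only [Ex3, Finset.mem_singleton] at hy
      subst hy
      exact entails_a (x := Atom.c) (by simp [Ex3]) (by simp [Ex3, ruleAC])

lemma not_smaller {x : Atom} (hx : x ≠ Atom.b) :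
    ¬ ∃ H', isSolution (∅ : Set (Rule Atom)) Lspace [Ex1, Ex2] H' ∧
      progLT H' {(⟨Atom.a, {x}, ∅⟩ : Rule Atom)} := by
  rintro ⟨H', ⟨-, hcov⟩, ⟨⟨f, hinj, hf⟩, hne⟩⟩
  by_cases hH' : H' = ∅
  · subst hH'
    have h1 := (hcov Ex1 (by simp)).1 Atom.a (by simp [Ex1])
    exact not_entails stable_Mpbc (by simp) h1
  · obtain ⟨r, hr⟩ := Finset.nonempty_iff_ne_empty.2 hH'
    have huniq : ∀ s ∈ H', s = r := by
      intro s hs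
      apply hinj hs hr
      have h1 := (hf s hs).1
      have h2 := (hf r hr).1
      simp only [Finset.mem_singleton] at h1 h2
      rw [h1, h2]
    have hHr : H' = {r} := Finset.eq_singleton_iff_unique_mem.2 ⟨hr, huniq⟩
    obtain ⟨hfr, hhead, hpos, hneg⟩ := hf r hr
    simp only [Finset.mem_singleton] at hfr
    rw [hfr] at hhead hpos hneg
    have hnegr : r.neg = ∅ := Finset.subset_empty.1 hneg
    rcases Finset.subset_singleton_iff.1 hpos with hp | hp
    · have hrfa : r = fact Atom.a := by
        cases r with
        | mk hd ps ns => simp_all [fact]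
      have h2 := (hcov Ex2 (by simp)).2 Atom.a (by simp [Ex2])
      apply h2
      intro M hM
      refine mem_of_stable hM (r := fact Atom.a) ?_ (by simp [fact]) (by simp [fact])
      rw [hHr, hrfa]
      simp
    · have hrx : r = ⟨Atom.a, {x}, ∅⟩ := by
        cases r with
        | mk hd ps ns => simp_all
      exact hne (by rw [hHr, hrx])

/-- (i) `{a ← p.}` and `{a ← c.}` are both minimal solutions of
the task with examples `⟨E_1, E_2⟩`; (ii) `{a ← p., a ← c.}` is a solution of
the task with examples `⟨E_1, E_2, E_3⟩`; (iii) it is not a minimal solution of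
that task, since `{a ← c.}` is also a solution and `{a ← c.} < {a ← p., a ← c.}`. -/
theorem iterative_expansion_not_minimal :
    (isMinimalSolution (∅ : Set (Rule Atom)) Lspace [Ex1, Ex2] {ruleAP} ∧
     isMinimalSolution (∅ : Set (Rule Atom)) Lspace [Ex1, Ex2] {ruleAC}) ∧
    isSolution (∅ : Set (Rule Atom)) Lspace [Ex1, Ex2, Ex3] {ruleAP, ruleAC} ∧
    (¬ isMinimalSolution (∅ : Set (Rule Atom)) Lspace [Ex1, Ex2, Ex3] {ruleAP, ruleAC} ∧
     isSolution (∅ : Set (Rule Atom)) Lspace [Ex1, Ex2, Ex3] {ruleAC} ∧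
     progLT {ruleAC} ({ruleAP, ruleAC} : Finset (Rule Atom))) := by
  have hlt : progLT {ruleAC} ({ruleAP, ruleAC} : Finset (Rule Atom)) := by
    refine ⟨⟨id, Set.injOn_id _, ?_⟩, by decide⟩
    intro r hr
    simp only [Finset.mem_singleton] at hr
    subst hr
    exact ⟨by decide, rfl, Finset.Subset.refl _, Finset.Subset.refl _⟩
  refine ⟨⟨⟨solAP, not_smaller (x := Atom.p) (by decide)⟩,
          ⟨solAC, not_smaller (x := Atom.c) (by decide)⟩⟩,
         solPair, ?_, solAC3, hlt⟩
  rintro ⟨-, hmin⟩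
  exact hmin ⟨{ruleAC}, solAC3, hlt⟩

end ASP
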